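/- For every connected graph G on n ≥ 2 vertices, ∂₁(G) - π(G) ≥ n-2, with equality if and only if G is the complete graph K_n. -/

import Mathlib

open SimpleGraph Finset

/-- The transmission of a vertex: the sum of distances from `v` to all other vertices. -/
noncomputable def transmission {n : ℕ} (G : SimpleGraph (Fin n)) (v : Fin n) : ℕ :=
  ∑ u, G.dist v u

/-- The proximity: the minimum average distance from a vertex to all others. -/
noncomputable def proximity {n : ℕ} (G : SimpleGraph (Fin n)) : ℝ :=
  sInf {x : ℝ | ∃ v : Fin n, x = transmission G v} / (n - 1)

/-- The remoteness: the maximum average distance from a vertex to all others. -/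
noncomputable def remoteness {n : ℕ} (G : SimpleGraph (Fin n)) : ℝ :=
  sSup {x : ℝ | ∃ v : Fin n, x = transmission G v} / (n - 1)

/-- The distance matrix of a graph. -/
noncomputable def distMatrix {n : ℕ} (G : SimpleGraph (Fin n)) : Matrix (Fin n) (Fin n) ℝ :=
  fun u v => (G.dist u v : ℝ)

/-- The largest distance eigenvalue ∂₁. -/
noncomputable def maxDistEig {n : ℕ} (G : SimpleGraph (Fin n)) : ℝ :=
  sSup (spectrum ℝ (distMatrix G))

/-- The smallest distance eigenvalue ∂ₙ. -/
noncomputable def minDistEig {n : ℕ} (G : SimpleGraph (Fin n)) : ℝ :=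
  sInf (spectrum ℝ (distMatrix G))

section Aux

open Matrix

lemma spec_eigvec {n : ℕ} {A : Matrix (Fin n) (Fin n) ℝ} {lam : ℝ}
    (h : lam ∈ spectrum ℝ A) : ∃ x : Fin n → ℝ, x ≠ 0 ∧ A *ᵥ x = lam • x := by
  rw [spectrum.mem_iff] at h
  rw [Matrix.isUnit_iff_isUnit_det, isUnit_iff_ne_zero, ne_eq, not_not] at h
  obtain ⟨x, hx0, hx⟩ := (Matrix.exists_mulVec_eq_zero_iff).2 h
  refine ⟨x, hx0, ?_⟩
  rw [Matrix.sub_mulVec, Matrix.algebraMap_eq_diagonal, sub_eq_zero] at hx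
  rw [← hx]
  ext i
  simp [Matrix.mulVec_diagonal]

lemma mem_spec_of_mulVec {n : ℕ} {A : Matrix (Fin n) (Fin n) ℝ} {lam : ℝ}
    {x : Fin n → ℝ} (hx0 : x ≠ 0) (hx : A *ᵥ x = lam • x) : lam ∈ spectrum ℝ A := by
  rw [spectrum.mem_iff, Matrix.isUnit_iff_isUnit_det, isUnit_iff_ne_zero, ne_eq, not_not]
  rw [← Matrix.exists_mulVec_eq_zero_iff]
  refine ⟨x, hx0, ?_⟩
  rw [Matrix.sub_mulVec, Matrix.algebraMap_eq_diagonal, hx, sub_eq_zero]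
  ext i
  simp [Matrix.mulVec_diagonal]

lemma perron_bound {n : ℕ} {A : Matrix (Fin n) (Fin n) ℝ}
    (hpos : ∀ i j, 0 ≤ A i j) {r : ℝ} (hrow : ∀ i, ∑ j, A i j ≤ r)
    {lam : ℝ} (hlam : lam ∈ spectrum ℝ A) : lam ≤ r := by
  obtain ⟨x, hx0, hx⟩ := spec_eigvec hlam
  obtain ⟨j0, hj0⟩ := Function.ne_iff.1 hx0
  have hne : (Finset.univ : Finset (Fin n)).Nonempty := ⟨j0, mem_univ _⟩
  obtain ⟨i, -, hi⟩ := Finset.exists_max_image univ (fun j => |x j|) hne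
  have hxi : 0 < |x i| := lt_of_lt_of_le (abs_pos.2 hj0) (hi j0 (mem_univ _))
  have key : lam * x i = ∑ j, A i j * x j := by
    have := congrFun hx i
    simpa [Matrix.mulVec, dotProduct, mul_comm] using this.symm
  have habs : |lam| * |x i| ≤ r * |x i| := by
    calc |lam| * |x i| = |lam * x i| := (abs_mul _ _).symm
    _ = |∑ j, A i j * x j| := by rw [key]
    _ ≤ ∑ j, |A i j * x j| := Finset.abs_sum_le_sum_abs _ _
    _ ≤ ∑ j, A i j * |x i| := by
        refine Finset.sum_le_sum fun j _ => ?_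
        rw [abs_mul, abs_of_nonneg (hpos i j)]
        exact mul_le_mul_of_nonneg_left (hi j (mem_univ _)) (hpos i j)
    _ = (∑ j, A i j) * |x i| := by rw [Finset.sum_mul]
    _ ≤ r * |x i| := mul_le_mul_of_nonneg_right (hrow i) (le_of_lt hxi)
  have : |lam| ≤ r := le_of_mul_le_mul_right habs hxi
  exact le_trans (le_abs_self lam) this

lemma rayleigh_one {n : ℕ} (hn : 0 < n) {A : Matrix (Fin n) (Fin n) ℝ}
    (hA : A.IsHermitian) : ∃ lam ∈ spectrum ℝ A, ∑ i, ∑ j, A i j ≤ lam * n := by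
  classical
  set U : Matrix (Fin n) (Fin n) ℝ := (hA.eigenvectorUnitary : Matrix (Fin n) (Fin n) ℝ)
    with hUdef
  set c : Fin n → ℝ := (fun _ => (1:ℝ)) ᵥ* U with hcdef
  have hUU : U * star U = 1 := mem_unitaryGroup_iff.mp hA.eigenvectorUnitary.2
  have hst : star U *ᵥ (fun _ => (1:ℝ)) = c := by
    rw [Matrix.star_eq_conjTranspose, Matrix.conjTranspose_eq_transpose_of_trivial,
      Matrix.mulVec_transpose]
  have hD : Matrix.diagonal (RCLike.ofReal ∘ hA.eigenvalues) = Matrix.diagonal hA.eigenvalues := by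
    congr 1
  have h1 : ∑ i, ∑ j, A i j = ∑ j, hA.eigenvalues j * (c j)^2 := by
    have e1 : ∑ i, ∑ j, A i j = ((fun _ => (1:ℝ)) ᵥ* A) ⬝ᵥ (fun _ => (1:ℝ)) := by
      simp [Matrix.vecMul, dotProduct]
      exact Finset.sum_comm
    rw [e1]
    conv_lhs => rw [hA.spectral_theorem, hD, Unitary.conjStarAlgAut_apply]
    rw [← Matrix.vecMul_vecMul, ← Matrix.vecMul_vecMul, ← hcdef,
      ← Matrix.dotProduct_mulVec, hst]
    simp [Matrix.vecMul_diagonal, dotProduct]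
    ring_nf
    exact Finset.sum_congr rfl fun j _ => by ring
  have h2 : ∑ j, (c j)^2 = (n : ℝ) := by
    have e1 : ∑ j, (c j)^2 = c ⬝ᵥ (star U *ᵥ (fun _ => (1:ℝ))) := by
      rw [hst]; simp [dotProduct, pow_two]
    rw [e1, Matrix.dotProduct_mulVec, hcdef, Matrix.vecMul_vecMul, hUU]
    simp [dotProduct]
  obtain ⟨i0, -, hi0⟩ := Finset.exists_max_image univ hA.eigenvalues
    ⟨⟨0, hn⟩, mem_univ _⟩
  refine ⟨hA.eigenvalues i0, hA.eigenvalues_mem_spectrum_real i0, ?_⟩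
  rw [h1, ← h2, Finset.mul_sum]
  exact Finset.sum_le_sum fun j _ =>
    mul_le_mul_of_nonneg_right (hi0 j (mem_univ _)) (sq_nonneg _)

end Aux

lemma transmission_lower {n : ℕ} {G : SimpleGraph (Fin n)} (hG : G.Connected) (v : Fin n) :
    n - 1 ≤ transmission G v := by
  unfold transmission
  rw [← Finset.add_sum_erase _ _ (mem_univ v), SimpleGraph.dist_self, zero_add]
  calc n - 1 = (univ.erase v).card := by
        rw [Finset.card_erase_of_mem (mem_univ v), Finset.card_univ, Fintype.card_fin]
  _ = ∑ _u ∈ univ.erase v, 1 := by rw [Finset.sum_const, smul_eq_mul, mul_one]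
  _ ≤ ∑ u ∈ univ.erase v, G.dist v u := by
      refine Finset.sum_le_sum fun u hu => ?_
      exact hG.pos_dist_of_ne (Ne.symm (Finset.ne_of_mem_erase hu))

lemma adj_of_transmission_le {n : ℕ} {G : SimpleGraph (Fin n)} (hG : G.Connected) (v : Fin n)
    (h : transmission G v ≤ n - 1) : ∀ u, u ≠ v → G.Adj v u := by
  have hcard : (univ.erase v).card = n - 1 := by
    rw [Finset.card_erase_of_mem (mem_univ v), Finset.card_univ, Fintype.card_fin]
  have hsum : ∑ u ∈ univ.erase v, G.dist v u ≤ n - 1 := by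
    calc ∑ u ∈ univ.erase v, G.dist v u
        ≤ transmission G v := by
          unfold transmission
          rw [← Finset.add_sum_erase _ _ (mem_univ v), SimpleGraph.dist_self, zero_add]
      _ ≤ n - 1 := h
  have hall : ∀ u ∈ univ.erase v, G.dist v u = 1 := by
    by_contra hcon
    push_neg at hcon
    obtain ⟨u0, hu0, hu0ne⟩ := hcon
    have h1 : ∀ u ∈ univ.erase v, 1 ≤ G.dist v u := fun u hu =>
      hG.pos_dist_of_ne (Ne.symm (Finset.ne_of_mem_erase hu))
    have hlt : ∑ _u ∈ univ.erase v, 1 < ∑ u ∈ univ.erase v, G.dist v u :=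
      Finset.sum_lt_sum h1 ⟨u0, hu0, lt_of_le_of_ne (h1 u0 hu0) (Ne.symm hu0ne)⟩
    rw [Finset.sum_const, smul_eq_mul, mul_one, hcard] at hlt
    omega
  intro u hu
  exact SimpleGraph.dist_eq_one_iff_adj.mp (hall u (Finset.mem_erase.mpr ⟨hu, mem_univ u⟩))

lemma transmission_top {n : ℕ} (v : Fin n) :
    transmission (⊤ : SimpleGraph (Fin n)) v = n - 1 := by
  unfold transmission
  rw [← Finset.add_sum_erase _ _ (mem_univ v), SimpleGraph.dist_self, zero_add]
  calc ∑ u ∈ univ.erase v, (⊤ : SimpleGraph (Fin n)).dist v u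
      = ∑ _u ∈ univ.erase v, 1 := by
        refine Finset.sum_congr rfl fun u hu => ?_
        exact SimpleGraph.dist_eq_one_iff_adj.mpr (Ne.symm (Finset.ne_of_mem_erase hu))
    _ = n - 1 := by
        rw [Finset.sum_const, smul_eq_mul, mul_one, Finset.card_erase_of_mem (mem_univ v),
          Finset.card_univ, Fintype.card_fin]

lemma fin2_adj {G : SimpleGraph (Fin 2)} (hG : G.Connected) {u v : Fin 2} (huv : u ≠ v) :
    G.Adj u v := by
  obtain ⟨w⟩ := hG.preconnected u v
  induction w with
  | nil => exact absurd rfl huv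
  | @cons a b c h p ih =>
    by_cases hbc : b = c
    · exact hbc ▸ h
    · exfalso
      have h1 : a.val ≠ c.val := fun hh => huv (Fin.ext hh)
      have h2 : b.val ≠ a.val := fun hh => (G.ne_of_adj h) (Fin.ext hh).symm
      have h3 : b.val ≠ c.val := fun hh => hbc (Fin.ext hh)
      have := a.isLt; have := b.isLt; have := c.isLt
      omega

lemma eq_top_of_transmission {n : ℕ} {G : SimpleGraph (Fin n)} (hG : G.Connected)
    (h : ∀ v, transmission G v ≤ n - 1) : G = ⊤ := by
  ext u v
  simp only [SimpleGraph.top_adj]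
  constructor
  · exact fun ha => ha.ne
  · intro huv
    exact (adj_of_transmission_le hG u (h u)) v (Ne.symm huv)

theorem maxDistEig_sub_proximity {n : ℕ} (hn : 2 ≤ n) (G : SimpleGraph (Fin n))
    (hG : G.Connected) :
    (n : ℝ) - 2 ≤ maxDistEig G - proximity G ∧
      (maxDistEig G - proximity G = (n : ℝ) - 2 ↔ G = ⊤) := by
  classical
  have hn0 : 0 < n := by omega
  have hn2R : (2:ℝ) ≤ (n:ℝ) := by exact_mod_cast hn
  have hnpos : (0:ℝ) < (n:ℝ) - 1 := by linarith
  set D := distMatrix G with hDdef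
  have hDpos : ∀ i j, 0 ≤ D i j := fun i j => by
    simp [hDdef, distMatrix]
  have hDher : D.IsHermitian := by
    show Matrix.conjTranspose D = D
    ext i j
    simp [hDdef, distMatrix, Matrix.conjTranspose_apply, SimpleGraph.dist_comm]
  have hrow : ∀ v, ∑ u, D v u = ((transmission G v : ℕ) : ℝ) := by
    intro v
    simp [hDdef, distMatrix, transmission]
  set S : Set ℝ := {x : ℝ | ∃ v : Fin n, x = transmission G v} with hSdef
  have hprox : proximity G = sInf S / ((n:ℝ) - 1) := rfl
  have hSr : S = Set.range (fun v : Fin n => ((transmission G v : ℕ) : ℝ)) := by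
    ext x
    simp only [hSdef, Set.mem_setOf_eq, Set.mem_range, eq_comm]
  have hSfin : S.Finite := hSr ▸ Set.finite_range _
  have hSne : S.Nonempty := ⟨((transmission G ⟨0, hn0⟩ : ℕ) : ℝ), ⟨⟨0, hn0⟩, rfl⟩⟩
  set m := sInf S with hmdef
  have hm_le : ∀ v, m ≤ ((transmission G v : ℕ) : ℝ) := fun v =>
    csInf_le hSfin.bddBelow ⟨v, rfl⟩
  obtain ⟨v0, hv0⟩ : m ∈ S := hSne.csInf_mem hSfin
  have hm_ge : (n:ℝ) - 1 ≤ m := by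
    have h1 := transmission_lower hG v0
    have h2 : ((n - 1 : ℕ) : ℝ) ≤ ((transmission G v0 : ℕ) : ℝ) := by exact_mod_cast h1
    rw [← hv0] at h2
    calc (n:ℝ) - 1 = ((n - 1 : ℕ) : ℝ) := by
          rw [Nat.cast_sub (by omega)]; norm_num
      _ ≤ m := h2
  have hsum_eq : ∑ i, ∑ j, D i j = ∑ v, ((transmission G v : ℕ) : ℝ) :=
    Finset.sum_congr rfl fun v _ => hrow v
  have hbdd : BddAbove (spectrum ℝ D) := by
    refine ⟨∑ v, ((transmission G v : ℕ) : ℝ), fun x hx => ?_⟩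
    refine perron_bound hDpos (fun i => ?_) hx
    rw [hrow i]
    exact Finset.single_le_sum (f := fun v => ((transmission G v : ℕ) : ℝ))
      (fun v _ => by positivity) (mem_univ i)
  obtain ⟨lam, hlam_mem, hlam_ray⟩ := rayleigh_one hn0 hDher
  have hlam_le : lam ≤ maxDistEig G := le_csSup hbdd hlam_mem
  have hlam_ge_m : m ≤ lam := by
    have h1 : (n:ℝ) * m ≤ ∑ v, ((transmission G v : ℕ) : ℝ) := by
      calc (n:ℝ) * m = ∑ _v : Fin n, m := by
            rw [Finset.sum_const, Finset.card_univ, Fintype.card_fin, nsmul_eq_mul]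
        _ ≤ _ := Finset.sum_le_sum fun v _ => hm_le v
    have h2 := hlam_ray
    rw [hsum_eq] at h2
    have hn0R : (0:ℝ) < (n:ℝ) := by linarith
    nlinarith
  have hmain : m ≤ maxDistEig G := le_trans hlam_ge_m hlam_le
  have hmcancel : (m / ((n:ℝ) - 1)) * ((n:ℝ) - 1) = m := div_mul_cancel₀ m (ne_of_gt hnpos)
  have hp1 : 1 ≤ m / ((n:ℝ) - 1) := by
    rw [le_div_iff₀ hnpos]; linarith
  refine ⟨?_, ?_, ?_⟩
  · -- inequality
    rw [hprox]
    nlinarith [hmain, hm_ge, hp1, hmcancel]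
  · -- equality → complete
    intro heq
    rcases eq_or_lt_of_le hn with hn2 | hn3
    · -- n = 2
      subst hn2
      ext u v
      simp only [SimpleGraph.top_adj]
      exact ⟨fun ha => ha.ne, fun huv => fin2_adj hG huv⟩
    · -- n ≥ 3
      have hn3' : (3:ℝ) ≤ (n:ℝ) := by exact_mod_cast hn3
      rw [hprox] at heq
      -- p ≤ 1
      have hple : m / ((n:ℝ) - 1) ≤ 1 := by
        nlinarith [hmain, hmcancel]
      have hpeq : m / ((n:ℝ) - 1) = 1 := le_antisymm hple hp1
      have hmeq : m = (n:ℝ) - 1 := by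
        rw [hpeq, one_mul] at hmcancel
        linarith [hmcancel]
      have hmax : maxDistEig G = (n:ℝ) - 1 := by
        rw [hpeq] at heq; linarith
      -- total sum bound
      have hsum_le : ∑ v, ((transmission G v : ℕ) : ℝ) ≤ (n:ℝ) * ((n:ℝ) - 1) := by
        rw [← hsum_eq]
        have : lam ≤ (n:ℝ) - 1 := hmax ▸ hlam_le
        nlinarith [hlam_ray]
      have hsum_nat : ∑ v, transmission G v ≤ n * (n - 1) := by
        have hc : ((∑ v, transmission G v : ℕ) : ℝ) ≤ ((n * (n - 1) : ℕ) : ℝ) := by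
          have e1 : ((∑ v, transmission G v : ℕ) : ℝ)
              = ∑ v, ((transmission G v : ℕ) : ℝ) := by push_cast; ring
          have e2 : ((n * (n - 1) : ℕ) : ℝ) = (n:ℝ) * ((n:ℝ) - 1) := by
            rw [Nat.cast_mul, Nat.cast_sub (by omega : 1 ≤ n)]; norm_num
          rw [e1, e2]
          exact hsum_le
        exact_mod_cast hc
      refine eq_top_of_transmission hG fun v => ?_
      by_contra hcon
      push_neg at hcon
      have hall : ∀ u, n - 1 ≤ transmission G u := fun u => transmission_lower hG u
      have hlt : ∑ _u : Fin n, (n - 1) < ∑ u, transmission G u :=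
        Finset.sum_lt_sum (fun u _ => hall u) ⟨v, mem_univ v, by omega⟩
      rw [Finset.sum_const, Finset.card_univ, Fintype.card_fin, smul_eq_mul] at hlt
      omega
  · -- complete → equality
    intro htop
    subst htop
    have htv : ∀ v, transmission (⊤ : SimpleGraph (Fin n)) v = n - 1 := transmission_top
    have hcast : ((n - 1 : ℕ) : ℝ) = (n:ℝ) - 1 := by
      rw [Nat.cast_sub (by omega)]; norm_num
    have hmeq : m = (n:ℝ) - 1 := by
      rw [hv0, htv v0, hcast]
    have hrow' : ∀ i, ∑ j, D i j = (n:ℝ) - 1 := by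
      intro i; rw [hrow i, htv i, hcast]
    have hmem : (n:ℝ) - 1 ∈ spectrum ℝ D := by
      refine mem_spec_of_mulVec (x := fun _ => (1:ℝ)) ?_ ?_
      · intro hzero
        have := congrFun hzero ⟨0, hn0⟩
        norm_num at this
      · funext i
        simp only [Matrix.mulVec, dotProduct, mul_one, Pi.smul_apply, smul_eq_mul]
        rw [hrow' i]
    have hmax : maxDistEig (⊤ : SimpleGraph (Fin n)) = (n:ℝ) - 1 := by
      refine le_antisymm ?_ (le_csSup hbdd hmem)
      exact Real.sSup_le (fun x hx => perron_bound hDpos (fun i => le_of_eq (hrow' i)) hx)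
        (by linarith)
    rw [hprox, hmax, hmeq, div_self (ne_of_gt hnpos)]
    ring
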